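/- arXiv:0812.3278 — 2 statements merged into one kernel-verified Lean document; each statement's English description precedes it below -/
import Mathlib

section
/- For all nonnegative integers e and f, the subspace S^eD^f decomposes as the internal direct sum S^eD^f = (ker Δ ∩ S^eD^f) ⊕ δ(S^{e-1}D^{f-1}); that is, the image of δ on bihomogeneous polynomials of bidegree (e-1, f-1) is a linear complement of V(e,f) := ker Δ ∩ S^eD^f inside S^eD^f (where S^{e-1}D^{f-1} := 0 if e = 0 or f = 0). -/
open MvPolynomial

noncomputable section

/-- The polynomial ring `R = ℂ[e₁,e₂,e₃,x₁,x₂,x₃]`: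
variables `0,1,2` are `e₁,e₂,e₃` and variables `3,4,5` are `x₁,x₂,x₃`. -/
abbrev R6 : Type := MvPolynomial (Fin 6) ℂ

/-- the variable `eᵢ` -/
def ev (i : Fin 3) : Fin 6 := ⟨i.val, by omega⟩

/-- the variable `xᵢ` -/
def xv (i : Fin 3) : Fin 6 := ⟨i.val + 3, by omega⟩

/-- `Δ = Σᵢ (∂/∂eᵢ)∘(∂/∂xᵢ)` -/
def Δ : Module.End ℂ R6 :=
  ∑ i : Fin 3, (pderiv (ev i)).toLinearMap ∘ₗ (pderiv (xv i)).toLinearMap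

/-- `δ` = multiplication by `e₁x₁+e₂x₂+e₃x₃` -/
def δ : Module.End ℂ R6 :=
  LinearMap.mulLeft ℂ (∑ i : Fin 3, X (ev i) * X (xv i))

/-- weight recording the total degree in the `e`-variables -/
def wE : Fin 6 → ℕ := fun i => if i.val < 3 then 1 else 0

/-- weight recording the total degree in the `x`-variables -/
def wX : Fin 6 → ℕ := fun i => if i.val < 3 then 0 else 1

/-- `S^aD^b`: polynomials homogeneous of degree `a` in `e₁,e₂,e₃` and of degree `b` in
`x₁,x₂,x₃`. -/
def SD (a b : ℕ) : Submodule ℂ R6 :=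
  weightedHomogeneousSubmodule ℂ wE a ⊓ weightedHomogeneousSubmodule ℂ wX b

/-- `S^{e-1}D^{f-1}`, interpreted as `0` when `e = 0` or `f = 0`. -/
def SDsub (e f : ℕ) : Submodule ℂ R6 :=
  if e = 0 ∨ f = 0 then ⊥ else SD (e - 1) (f - 1)

/-- `V(a,b) = ker Δ ∩ S^aD^b` -/
def V (a b : ℕ) : Submodule ℂ R6 := LinearMap.ker Δ ⊓ SD a b


lemma weight_single_one (w : Fin 6 → ℕ) (i : Fin 6) :
    Finsupp.weight w (Finsupp.single i 1) = w i := by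
  simp [Finsupp.weight_apply, Finsupp.sum_single_index]

lemma pd_hom {w : Fin 6 → ℕ} (i : Fin 6) {p : R6} {n : ℕ}
    (h : IsWeightedHomogeneous w p (n + w i)) :
    IsWeightedHomogeneous w (pderiv i p) n := by
  rw [p.as_sum, map_sum]
  apply IsWeightedHomogeneous.sum
  intro v hv
  rw [pderiv_monomial]
  rcases Nat.eq_zero_or_pos (v i) with h0 | h0
  · rw [h0]
    simpa using isWeightedHomogeneous_zero ℂ w n
  · apply isWeightedHomogeneous_monomial
    have hle : Finsupp.single i 1 ≤ v := by
      rw [Finsupp.single_le_iff]; omega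
    have hv' : Finsupp.weight w v = n + w i := h (mem_support_iff.mp hv)
    have : (v - Finsupp.single i 1) + Finsupp.single i 1 = v := tsub_add_cancel_of_le hle
    have h2 := congrArg (Finsupp.weight w) this
    rw [map_add, weight_single_one, hv'] at h2
    omega

lemma pd_zero {w : Fin 6 → ℕ} (i : Fin 6) (hw : w i ≠ 0) {p : R6}
    (h : IsWeightedHomogeneous w p 0) : pderiv i p = 0 := by
  rw [p.as_sum, map_sum]
  apply Finset.sum_eq_zero
  intro v hv
  rw [pderiv_monomial]
  have hv' : Finsupp.weight w v = 0 := h (mem_support_iff.mp hv)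
  have := Finsupp.le_weight w hw v
  rw [hv'] at this
  simp [Nat.le_zero.mp this]

lemma weight_eq_sum_univ (w : Fin 6 → ℕ) (v : Fin 6 →₀ ℕ) :
    Finsupp.weight w v = ∑ i : Fin 6, v i * w i := by
  rw [Finsupp.weight_apply, Finsupp.sum]
  refine Finset.sum_subset (Finset.subset_univ _) ?_
  intro i _ hi
  simp [Finsupp.notMem_support_iff.mp hi]

lemma euler_mono (w : Fin 6 → ℕ) (v : Fin 6 →₀ ℕ) (c : ℂ) :
    ∑ i : Fin 6, (w i : ℂ) • (X i * pderiv i (monomial v c)) =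
      ((Finsupp.weight w v : ℕ) : ℂ) • monomial v c := by
  have key : ∀ i : Fin 6, (w i : ℂ) • (X i * pderiv i (monomial v c)) =
      ((v i * w i : ℕ) : ℂ) • monomial v c := by
    intro i
    rw [pderiv_monomial]
    rcases Nat.eq_zero_or_pos (v i) with h0 | h0
    · rw [h0]; simp
    · have hle : Finsupp.single i 1 ≤ v := by rw [Finsupp.single_le_iff]; omega
      rw [X, monomial_mul, add_tsub_cancel_of_le hle]
      rw [smul_monomial, smul_monomial]
      congr 1
      simp only [smul_eq_mul]
      push_cast
      ring
  rw [Finset.sum_congr rfl fun i _ => key i, ← Finset.sum_smul]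
  congr 1
  rw [← Nat.cast_sum]
  rw [weight_eq_sum_univ]

lemma euler (w : Fin 6 → ℕ) {p : R6} {n : ℕ} (h : IsWeightedHomogeneous w p n) :
    ∑ i : Fin 6, (w i : ℂ) • (X i * pderiv i p) = (n : ℂ) • p := by
  conv_lhs => rw [p.as_sum]
  conv_rhs => rw [p.as_sum]
  simp only [map_sum, Finset.mul_sum, Finset.smul_sum]
  rw [Finset.sum_comm]
  refine Finset.sum_congr rfl ?_
  intro v hv
  rw [euler_mono, h (mem_support_iff.mp hv)]

lemma ev0 : ev 0 = (0 : Fin 6) := rfl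
lemma ev1 : ev 1 = (1 : Fin 6) := rfl
lemma ev2 : ev 2 = (2 : Fin 6) := rfl
lemma xv0 : xv 0 = (3 : Fin 6) := rfl
lemma xv1 : xv 1 = (4 : Fin 6) := rfl
lemma xv2 : xv 2 = (5 : Fin 6) := rfl

lemma eulerE {p : R6} {a : ℕ} (h : IsWeightedHomogeneous wE p a) :
    ∑ i : Fin 3, X (ev i) * pderiv (ev i) p = (a : ℂ) • p := by
  have h6 := euler wE h
  rw [Fin.sum_univ_six] at h6
  norm_num [wE, show ((0:Fin 6):ℕ) = 0 from rfl, show ((1:Fin 6):ℕ) = 1 from rfl,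
    show ((2:Fin 6):ℕ) = 2 from rfl, show ((3:Fin 6):ℕ) = 3 from rfl,
    show ((4:Fin 6):ℕ) = 4 from rfl, show ((5:Fin 6):ℕ) = 5 from rfl] at h6
  rw [Fin.sum_univ_three, ev0, ev1, ev2]
  exact h6

lemma eulerX {p : R6} {b : ℕ} (h : IsWeightedHomogeneous wX p b) :
    ∑ i : Fin 3, X (xv i) * pderiv (xv i) p = (b : ℂ) • p := by
  have h6 := euler wX h
  rw [Fin.sum_univ_six] at h6
  norm_num [wX, show ((0:Fin 6):ℕ) = 0 from rfl, show ((1:Fin 6):ℕ) = 1 from rfl,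
    show ((2:Fin 6):ℕ) = 2 from rfl, show ((3:Fin 6):ℕ) = 3 from rfl,
    show ((4:Fin 6):ℕ) = 4 from rfl, show ((5:Fin 6):ℕ) = 5 from rfl] at h6
  rw [Fin.sum_univ_three, xv0, xv1, xv2]
  exact h6

lemma ev_ne_xv (j i : Fin 3) : ev j ≠ xv i := by
  intro h
  have := congrArg Fin.val h
  simp only [ev, xv] at this
  omega

lemma pderiv_s_x (i : Fin 3) :
    pderiv (xv i) (∑ j : Fin 3, X (ev j) * X (xv j) : R6) = X (ev i) := by
  rw [map_sum]
  rw [Finset.sum_eq_single i]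
  · rw [pderiv_mul, pderiv_X_of_ne (ev_ne_xv i i), pderiv_X_self, zero_mul, mul_one, zero_add]
  · intro j _ hj
    have : xv j ≠ xv i := by
      intro h
      have h2 := congrArg Fin.val h
      simp only [xv] at h2
      exact hj (Fin.ext (by omega))
    rw [pderiv_mul, pderiv_X_of_ne (ev_ne_xv j i), pderiv_X_of_ne this, zero_mul, mul_zero,
      zero_add]
  · intro h; exact absurd (Finset.mem_univ i) h

lemma pderiv_s_e (i : Fin 3) :
    pderiv (ev i) (∑ j : Fin 3, X (ev j) * X (xv j) : R6) = X (xv i) := by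
  rw [map_sum]
  rw [Finset.sum_eq_single i]
  · rw [pderiv_mul, pderiv_X_of_ne (Ne.symm (ev_ne_xv i i)), pderiv_X_self, one_mul, mul_zero,
      add_zero]
  · intro j _ hj
    have : ev j ≠ ev i := by
      intro h
      have h2 := congrArg Fin.val h
      simp only [ev] at h2
      exact hj (Fin.ext (by omega))
    rw [pderiv_mul, pderiv_X_of_ne (Ne.symm (ev_ne_xv i j)), pderiv_X_of_ne this, zero_mul,
      mul_zero, zero_add]
  · intro h; exact absurd (Finset.mem_univ i) h

lemma Δ_apply (q : R6) : Δ q = ∑ i : Fin 3, pderiv (ev i) (pderiv (xv i) q) := by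
  simp [Δ]

lemma δ_apply (q : R6) : δ q = (∑ j : Fin 3, X (ev j) * X (xv j)) * q := rfl

lemma commSD {a b : ℕ} {p : R6} (hE : IsWeightedHomogeneous wE p a)
    (hX : IsWeightedHomogeneous wX p b) :
    Δ (δ p) = δ (Δ p) + (((a : ℂ) + b + 3)) • p := by
  rw [δ_apply, Δ_apply]
  have step : ∀ i : Fin 3, pderiv (ev i) (pderiv (xv i)
      ((∑ j : Fin 3, X (ev j) * X (xv j)) * p)) =
      p + X (ev i) * pderiv (ev i) p + X (xv i) * pderiv (xv i) p +
        (∑ j : Fin 3, X (ev j) * X (xv j)) * pderiv (ev i) (pderiv (xv i) p) := by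
    intro i
    rw [pderiv_mul, pderiv_s_x, map_add, pderiv_mul, pderiv_mul, pderiv_s_e, pderiv_X_self]
    ring
  rw [Finset.sum_congr rfl fun i _ => step i]
  simp only [Finset.sum_add_distrib]
  rw [eulerE hE, eulerX hX, Finset.sum_const, ← Finset.mul_sum, ← Δ_apply, ← δ_apply,
    Finset.card_univ, Fintype.card_fin]
  rw [show (3 : ℕ) • p = ((3 : ℕ) : ℂ) • p from (Nat.cast_smul_eq_nsmul ℂ 3 p).symm]
  push_cast
  module

lemma wE_ev (i : Fin 3) : wE (ev i) = 1 := by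
  simp only [wE, ev]; exact if_pos i.isLt
lemma wE_xv (i : Fin 3) : wE (xv i) = 0 := by
  simp only [wE, xv]; exact if_neg (by omega)
lemma wX_ev (i : Fin 3) : wX (ev i) = 0 := by
  simp only [wX, ev]; exact if_pos i.isLt
lemma wX_xv (i : Fin 3) : wX (xv i) = 1 := by
  simp only [wX, xv]; exact if_neg (by omega)

lemma s_homE : IsWeightedHomogeneous wE (∑ j : Fin 3, X (ev j) * X (xv j) : R6) 1 := by
  apply IsWeightedHomogeneous.sum
  intro j _
  have := (isWeightedHomogeneous_X ℂ wE (ev j)).mul (isWeightedHomogeneous_X ℂ wE (xv j))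
  rwa [wE_ev, wE_xv, add_zero] at this

lemma s_homX : IsWeightedHomogeneous wX (∑ j : Fin 3, X (ev j) * X (xv j) : R6) 1 := by
  apply IsWeightedHomogeneous.sum
  intro j _
  have := (isWeightedHomogeneous_X ℂ wX (ev j)).mul (isWeightedHomogeneous_X ℂ wX (xv j))
  rwa [wX_ev, wX_xv, zero_add] at this

lemma delta_mem {a b : ℕ} {p : R6} (hp : p ∈ SD a b) : δ p ∈ SD (a + 1) (b + 1) := by
  rw [δ_apply]
  constructor
  · have := s_homE.mul hp.1
    rwa [add_comm] at this
  · have := s_homX.mul hp.2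
    rwa [add_comm] at this

lemma Delta_mem {a b : ℕ} {p : R6} (hp : p ∈ SD (a + 1) (b + 1)) : Δ p ∈ SD a b := by
  rw [Δ_apply]
  apply Submodule.sum_mem
  intro i _
  have h1 : IsWeightedHomogeneous wE (pderiv (xv i) p) (a + 1) := by
    apply pd_hom
    rw [wE_xv, add_zero]
    exact hp.1
  have h2 : IsWeightedHomogeneous wX (pderiv (xv i) p) b := by
    apply pd_hom
    rw [wX_xv]
    exact hp.2
  constructor
  · apply pd_hom
    rwa [wE_ev]
  · apply pd_hom
    rwa [wX_ev, add_zero]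

lemma Delta_zero_left {b : ℕ} {p : R6} (hp : p ∈ SD 0 b) : Δ p = 0 := by
  rw [Δ_apply]
  apply Finset.sum_eq_zero
  intro i _
  apply pd_zero (w := wE) (ev i) (by rw [wE_ev]; omega)
  apply pd_hom (w := wE) (n := 0)
  rw [wE_xv, add_zero]
  exact hp.1

lemma Delta_zero_right {a : ℕ} {p : R6} (hp : p ∈ SD a 0) : Δ p = 0 := by
  rw [Δ_apply]
  apply Finset.sum_eq_zero
  intro i _
  rw [pd_zero (xv i) (by rw [wX_xv]; omega) hp.2, map_zero]

instance SD_fd (a b : ℕ) : FiniteDimensional ℂ (SD a b) := by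
  apply Submodule.finiteDimensional_of_le (S₂ := restrictTotalDegree (Fin 6) ℂ (a + b))
  intro p hp
  rw [mem_restrictTotalDegree, totalDegree]
  apply Finset.sup_le
  intro d hd
  have hE : Finsupp.weight wE d = a := hp.1 (mem_support_iff.mp hd)
  have hX : Finsupp.weight wX d = b := hp.2 (mem_support_iff.mp hd)
  rw [weight_eq_sum_univ] at hE hX
  have hsum : (Finsupp.sum d fun _ e => e) = ∑ i ∈ d.support, d i := rfl
  rw [hsum]
  have h1 : ∑ i ∈ d.support, d i ≤ ∑ i : Fin 6, d i :=
    Finset.sum_le_sum_of_subset (Finset.subset_univ _)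
  have h2 : ∑ i : Fin 6, d i = ∑ i : Fin 6, d i * wE i + ∑ i : Fin 6, d i * wX i := by
    rw [← Finset.sum_add_distrib]
    apply Finset.sum_congr rfl
    intro i _
    simp only [wE, wX]
    split <;> ring
  omega

lemma zero_of_nat_smul {K : ℕ} (hK : K ≠ 0) {q : R6} (h : ((K : ℕ) : ℂ) • q = 0) : q = 0 := by
  rcases smul_eq_zero.mp h with h | h
  · exact absurd (Nat.cast_eq_zero.mp h) hK
  · exact h

lemma key (a : ℕ) : ∀ (b c : ℕ) (q : R6), q ∈ SD a b → Δ (δ q) + (c : ℂ) • q = 0 → q = 0 := by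
  induction a with
  | zero =>
    intro b c q hq h0
    have hcomm := commSD hq.1 hq.2
    rw [Delta_zero_left hq, map_zero, zero_add] at hcomm
    rw [hcomm, ← add_smul] at h0
    have hsc : ((b + 3 + c : ℕ) : ℂ) = ((0 : ℕ) : ℂ) + (b : ℕ) + 3 + (c : ℕ) := by
      push_cast; ring
    rw [← hsc] at h0
    exact zero_of_nat_smul (by omega) h0
  | succ a' IH =>
    intro b c q hq h0
    cases b with
    | zero =>
      have hcomm := commSD hq.1 hq.2
      rw [Delta_zero_right hq, map_zero, zero_add] at hcomm
      rw [hcomm, ← add_smul] at h0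
      have hsc : ((a' + 1 + 3 + c : ℕ) : ℂ) = ((a' + 1 : ℕ) : ℂ) + ((0 : ℕ) : ℂ) + 3 + (c : ℕ) := by
        push_cast; ring
      rw [← hsc] at h0
      exact zero_of_nat_smul (by omega) h0
    | succ b' =>
      have hΔq : Δ q ∈ SD a' b' := Delta_mem hq
      have hcomm := commSD hq.1 hq.2
      rw [hcomm, add_assoc, ← add_smul] at h0
      have hsc : ((a' + 1 + (b' + 1) + 3 + c : ℕ) : ℂ) =
          ((a' + 1 : ℕ) : ℂ) + ((b' + 1 : ℕ) : ℂ) + 3 + (c : ℕ) := by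
        push_cast; ring
      rw [← hsc] at h0
      have h3 := congrArg (fun r => Δ r) h0
      simp only [map_add, map_smul, map_zero] at h3
      have h4 : Δ q = 0 := IH b' (a' + 1 + (b' + 1) + 3 + c) (Δ q) hΔq h3
      rw [h4, map_zero, zero_add] at h0
      exact zero_of_nat_smul (by omega) h0


/-- `S^eD^f` decomposes as the internal direct sum of `V(e,f) = ker Δ ∩ S^eD^f` and the image
`δ(S^{e-1}D^{f-1})`. -/
theorem stmt4 (e f : ℕ) :
    (V e f ⊔ (SDsub e f).map δ = SD e f) ∧ (V e f ⊓ (SDsub e f).map δ = ⊥) := by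
  by_cases h0 : e = 0 ∨ f = 0
  · rw [SDsub, if_pos h0, Submodule.map_bot, sup_bot_eq, inf_bot_eq]
    refine ⟨le_antisymm inf_le_right fun p hp => ⟨?_, hp⟩, rfl⟩
    simp only [SetLike.mem_coe, LinearMap.mem_ker]
    rcases h0 with h0 | h0
    · subst h0; exact Delta_zero_left hp
    · subst h0; exact Delta_zero_right hp
  · push_neg at h0
    obtain ⟨e', rfl⟩ := Nat.exists_eq_succ_of_ne_zero h0.1
    obtain ⟨f', rfl⟩ := Nat.exists_eq_succ_of_ne_zero h0.2
    have hsub : SDsub (e' + 1) (f' + 1) = SD e' f' := by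
      rw [SDsub, if_neg (by simp)]
      norm_num
    rw [hsub]
    have hmapsto : ∀ x ∈ SD e' f', (Δ ∘ₗ δ) x ∈ SD e' f' := fun x hx =>
      by rw [LinearMap.comp_apply]; exact Delta_mem (delta_mem hx)
    set T : SD e' f' →ₗ[ℂ] SD e' f' := (Δ ∘ₗ δ).restrict hmapsto with hT
    have hinj : Function.Injective T := by
      rw [← LinearMap.ker_eq_bot, LinearMap.ker_eq_bot']
      intro q hq
      have hq' : Δ (δ (q : R6)) = 0 := by
        have := congrArg (Subtype.val) hq
        simpa [hT, LinearMap.restrict_apply] using this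
      have : (q : R6) = 0 := key e' f' 0 q q.2 (by rw [hq']; simp)
      exact Subtype.ext this
    have hsurj : Function.Surjective T := LinearMap.injective_iff_surjective.mp hinj
    constructor
    · apply le_antisymm
      · apply sup_le inf_le_right
        rintro p hp
        rw [Submodule.mem_map] at hp
        obtain ⟨q, hq, rfl⟩ := hp
        exact delta_mem hq
      · intro p hp
        obtain ⟨q, hq⟩ := hsurj ⟨Δ p, Delta_mem hp⟩
        have hq' : Δ (δ (q : R6)) = Δ p := by
          have := congrArg (Subtype.val) hq
          simpa [hT, LinearMap.restrict_apply] using this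
        have hker : p - δ (q : R6) ∈ V (e' + 1) (f' + 1) := by
          refine ⟨?_, Submodule.sub_mem _ hp (delta_mem q.2)⟩
          simp only [SetLike.mem_coe, LinearMap.mem_ker, map_sub, hq', sub_self]
        have hmem : δ (q : R6) ∈ (SD e' f').map δ := Submodule.mem_map.mpr ⟨q, q.2, rfl⟩
        have : p = (p - δ (q : R6)) + δ (q : R6) := by ring
        rw [this]
        exact Submodule.add_mem_sup hker hmem
    · rw [eq_bot_iff]
      rintro p ⟨hV, hmap⟩
      simp only [SetLike.mem_coe, Submodule.mem_map] at hmap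
      obtain ⟨q, hq, rfl⟩ := hmap
      have hker : Δ (δ q) = 0 := hV.1
      have : q = 0 := key e' f' 0 q hq (by rw [hker]; simp)
      simp [this]
end
end

section
/- For all nonnegative integers m, n and every nonnegative integer i, there exists a nonzero rational number c (depending on m, n, i) such that Δ^i(δ^i(e₁^m · x₃^n)) = c · e₁^m · x₃^n in R. -/
open MvPolynomial

noncomputable section

-- Euler identity on monomials
lemma X_mul_pderiv_monomial (v : Fin 6) (s : Fin 6 →₀ ℕ) (a : ℂ) :
    X v * pderiv v (monomial s a) = monomial s (a * s v) := by
  rw [pderiv_monomial]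
  rcases Nat.eq_zero_or_pos (s v) with h | h
  · simp [h]
  · rw [X, monomial_mul, one_mul]
    congr 1
    rw [add_comm]
    exact congrArg _ (tsub_add_cancel_of_le (Finsupp.single_le_iff.mpr h))

lemma euler_s7 {D : ℕ} {g : R6} (hg : g.IsHomogeneous D) :
    ∑ v : Fin 6, X v * pderiv v g = (D : ℂ) • g := by
  conv_lhs => rw [g.as_sum]
  conv_rhs => rw [g.as_sum]
  rw [Finset.smul_sum]
  simp only [map_sum, Finset.mul_sum]
  rw [Finset.sum_comm]
  refine Finset.sum_congr rfl fun d hd => ?_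
  have hdeg : ∑ v : Fin 6, d v = D := by
    have := hg (mem_support_iff.mp hd)
    rw [← this]
    simp [Finsupp.weight_apply, Finsupp.sum]
    rw [Finset.sum_subset (Finset.subset_univ d.support)]
    intro x _ hx
    simp [Finsupp.notMem_support_iff.mp hx]
  calc ∑ v : Fin 6, X v * pderiv v (monomial d (coeff d g))
      = ∑ v : Fin 6, monomial d (coeff d g * d v) := by
        exact Finset.sum_congr rfl fun v _ => X_mul_pderiv_monomial v d _
    _ = monomial d (coeff d g * ∑ v : Fin 6, (d v : ℂ)) := by
        rw [Finset.mul_sum, map_sum]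
    _ = (D : ℂ) • monomial d (coeff d g) := by
        rw [← Nat.cast_sum, hdeg, smul_monomial, mul_comm]
        simp [Complex.coe_smul]

lemma comm_rel (g : R6) :
    Δ (δ g) = δ (Δ g) + (3 : ℂ) • g + ∑ v : Fin 6, X v * pderiv v g := by
  simp only [Δ, δ, LinearMap.sum_apply, LinearMap.comp_apply, LinearMap.coe_comp,
    Function.comp_apply, AlgHom.toLinearMap_apply, Derivation.coeFn_coe,
    LinearMap.mulLeft_apply, Fin.sum_univ_three, Fin.sum_univ_six]
  simp only [ev, xv]
  norm_num
  norm_num [Fin.ext_iff]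
  simp only [show (⟨2, by omega⟩ : Fin 6) = 2 from rfl, show (⟨3, by omega⟩ : Fin 6) = 3 from rfl,
    show (⟨4, by omega⟩ : Fin 6) = 4 from rfl, show (⟨5, by omega⟩ : Fin 6) = 5 from rfl,
    smul_eq_C_mul, map_ofNat]
  ring


lemma hs_homog : (∑ i : Fin 3, X (ev i) * X (xv i) : R6).IsHomogeneous 2 := by
  apply IsHomogeneous.sum
  intro i _
  exact (isHomogeneous_X _ _).mul (isHomogeneous_X _ _)

lemma hf_homog (m n : ℕ) :
    (X (ev 0) ^ m * X (xv 2) ^ n : R6).IsHomogeneous (m + n) :=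
  (isHomogeneous_X_pow _ _).mul (isHomogeneous_X_pow _ _)

lemma hδ_homog (m n : ℕ) : ∀ i : ℕ,
    ((δ ^ i) (X (ev 0) ^ m * X (xv 2) ^ n) : R6).IsHomogeneous (m + n + 2 * i) := by
  intro i
  induction i with
  | zero => simpa using hf_homog m n
  | succ k ih =>
      rw [pow_succ', Module.End.mul_apply]
      have : Δ = Δ := rfl
      have h2 : (δ ((δ ^ k) (X (ev 0) ^ m * X (xv 2) ^ n)) : R6).IsHomogeneous
          (2 + (m + n + 2 * k)) := by
        rw [δ, LinearMap.mulLeft_apply]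
        exact hs_homog.mul ih
      convert h2 using 1
      omega

lemma Δ_f_eq_zero (m n : ℕ) : Δ (X (ev 0) ^ m * X (xv 2) ^ n : R6) = 0 := by
  simp only [Δ, LinearMap.sum_apply, LinearMap.coe_comp, Function.comp_apply,
    Derivation.coeFn_coe, Fin.sum_univ_three]
  simp only [show ev 0 = 0 from rfl, show ev 1 = 1 from rfl, show ev 2 = 2 from rfl,
    show xv 0 = 3 from rfl, show xv 1 = 4 from rfl, show xv 2 = 5 from rfl]
  simp [pderiv_mul, pderiv_pow,
    pderiv_X_of_ne (show (0:Fin 6) ≠ 3 by decide), pderiv_X_of_ne (show (5:Fin 6) ≠ 3 by decide),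
    pderiv_X_of_ne (show (0:Fin 6) ≠ 4 by decide), pderiv_X_of_ne (show (5:Fin 6) ≠ 4 by decide),
    pderiv_X_of_ne (show (0:Fin 6) ≠ 5 by decide), pderiv_X_self,
    pderiv_X_of_ne (show (0:Fin 6) ≠ 2 by decide), pderiv_X_of_ne (show (5:Fin 6) ≠ 2 by decide)]

lemma key_s7 (m n : ℕ) : ∀ i : ℕ,
    Δ ((δ ^ (i + 1)) (X (ev 0) ^ m * X (xv 2) ^ n : R6)) =
      (((i + 1) * (m + n + i + 3) : ℕ) : ℂ) • (δ ^ i) (X (ev 0) ^ m * X (xv 2) ^ n : R6) := by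
  intro i
  induction i with
  | zero =>
      rw [pow_one, pow_zero, Module.End.one_apply]
      rw [comm_rel, Δ_f_eq_zero, map_zero, euler_s7 (hf_homog m n), zero_add, ← add_smul]
      congr 1
      push_cast
      ring
  | succ k ih =>
      have hg := hδ_homog m n (k + 1)
      rw [pow_succ', Module.End.mul_apply, comm_rel, euler_s7 hg, ih, map_smul,
        ← Module.End.mul_apply, ← pow_succ', ← add_smul, ← add_smul]
      congr 1
      push_cast
      ring

/-- For all nonnegative integers `m, n, i` there is a nonzero rational `c` with
`Δ^i (δ^i (e₁^m x₃^n)) = c • e₁^m x₃^n`. -/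
theorem stmt7 (m n i : ℕ) :
    ∃ c : ℚ, c ≠ 0 ∧
      (Δ ^ i) ((δ ^ i) (X (ev 0) ^ m * X (xv 2) ^ n)) =
        (c : ℂ) • (X (ev 0) ^ m * X (xv 2) ^ n) := by
  induction i with
  | zero => exact ⟨1, one_ne_zero, by simp⟩
  | succ k ih =>
      obtain ⟨c, hc, hce⟩ := ih
      refine ⟨((k + 1) * (m + n + k + 3) : ℕ) * c, ?_, ?_⟩
      · positivity
      · rw [pow_succ, Module.End.mul_apply, key_s7 m n k, map_smul, hce, smul_smul]
        push_cast
        ring_nf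
end
end
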